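/- In the group G_ΔL, the element c = c₁c₂c₃c₄ commutes with ℓ₁ and with ℓ₂; consequently c also commutes with ℓ∞ = (c·ℓ₁·ℓ₂)⁻¹, and the element ℓ₁ℓ₂ℓ∞ = c⁻¹ commutes with each of ℓ₁, ℓ₂, ℓ∞. -/
import Mathlib

def GdLrels : Set (FreeGroup (Fin 7)) :=
  let c₁ : FreeGroup (Fin 7) := FreeGroup.of 0
  let c₂ : FreeGroup (Fin 7) := FreeGroup.of 1
  let c₃ : FreeGroup (Fin 7) := FreeGroup.of 2
  let c₄ : FreeGroup (Fin 7) := FreeGroup.of 3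
  let l₁ : FreeGroup (Fin 7) := FreeGroup.of 4
  let l₂ : FreeGroup (Fin 7) := FreeGroup.of 5
  let li : FreeGroup (Fin 7) := FreeGroup.of 6
  { l₂ * c₁ * l₂⁻¹ * c₁⁻¹,
    l₂⁻¹ * c₂ * l₂ * ((c₂ * c₃ * c₄) * c₃ * (c₂ * c₃ * c₄)⁻¹)⁻¹,
    l₂⁻¹ * c₃ * l₂ * ((c₂ * c₃) * c₄ * (c₂ * c₃)⁻¹)⁻¹,
    l₂⁻¹ * c₄ * l₂ * c₂⁻¹,
    l₁⁻¹ * c₁ * l₁ * ((c₁ * c₂) * c₃ * (c₁ * c₂)⁻¹)⁻¹,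
    l₁⁻¹ * c₂ * l₁ * ((c₁ * c₂) * c₁ * (c₁ * c₂)⁻¹)⁻¹,
    l₁⁻¹ * c₃ * l₁ * (c₁ * c₂ * c₁⁻¹)⁻¹,
    l₁ * c₄ * l₁⁻¹ * c₄⁻¹,
    c₁ * c₂ * c₃ * c₄ * l₁ * l₂ * li }

abbrev GdL := PresentedGroup GdLrels

lemma GdL.key : ∀ r ∈ GdLrels, PresentedGroup.mk GdLrels r = 1 := fun r hr =>
  (QuotientGroup.eq_one_iff r).mpr (Subgroup.subset_normalClosure hr)


set_option maxHeartbeats 2000000 in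
theorem c_commutes_with_lines :
    let c : GdL := PresentedGroup.of 0 * PresentedGroup.of 1 *
      PresentedGroup.of 2 * PresentedGroup.of 3
    Commute c (PresentedGroup.of 4) ∧
    Commute c (PresentedGroup.of 5) ∧
    (PresentedGroup.of 6 : GdL) = (c * PresentedGroup.of 4 * PresentedGroup.of 5)⁻¹ ∧
    Commute c (PresentedGroup.of 6) ∧
    (PresentedGroup.of 4 * PresentedGroup.of 5 * PresentedGroup.of 6 : GdL) = c⁻¹ ∧
    Commute (PresentedGroup.of 4 * PresentedGroup.of 5 * PresentedGroup.of 6 : GdL)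
      (PresentedGroup.of 4) ∧
    Commute (PresentedGroup.of 4 * PresentedGroup.of 5 * PresentedGroup.of 6 : GdL)
      (PresentedGroup.of 5) ∧
    Commute (PresentedGroup.of 4 * PresentedGroup.of 5 * PresentedGroup.of 6 : GdL)
      (PresentedGroup.of 6) := by
  intro c
  -- shorthand for generators
  have hof : ∀ i : Fin 7, PresentedGroup.mk GdLrels (FreeGroup.of i) = PresentedGroup.of i :=
    fun _ => rfl
  set C₁ : GdL := PresentedGroup.of 0 with hC₁
  set C₂ : GdL := PresentedGroup.of 1 with hC₂
  set C₃ : GdL := PresentedGroup.of 2 with hC₃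
  set C₄ : GdL := PresentedGroup.of 3 with hC₄
  set L₁ : GdL := PresentedGroup.of 4 with hL₁
  set L₂ : GdL := PresentedGroup.of 5 with hL₂
  set Li : GdL := PresentedGroup.of 6 with hLi
  have key : ∀ r ∈ GdLrels, PresentedGroup.mk GdLrels r = 1 := fun r hr =>
    (QuotientGroup.eq_one_iff r).mpr (Subgroup.subset_normalClosure hr)
  -- get the nine relations in GdL
  have g1 : L₂ * C₁ * L₂⁻¹ * C₁⁻¹ = 1 := by
    have := key _ (show (FreeGroup.of 5 * FreeGroup.of 0 * (FreeGroup.of 5)⁻¹ *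
      (FreeGroup.of 0)⁻¹ : FreeGroup (Fin 7)) ∈ GdLrels by simp [GdLrels])
    simpa only [map_mul, map_inv, hof] using this
  have g2 : L₂⁻¹ * C₂ * L₂ * ((C₂ * C₃ * C₄) * C₃ * (C₂ * C₃ * C₄)⁻¹)⁻¹ = 1 := by
    have := key _ (show ((FreeGroup.of 5)⁻¹ * FreeGroup.of 1 * FreeGroup.of 5 *
      ((FreeGroup.of 1 * FreeGroup.of 2 * FreeGroup.of 3) * FreeGroup.of 2 *
       (FreeGroup.of 1 * FreeGroup.of 2 * FreeGroup.of 3)⁻¹)⁻¹ : FreeGroup (Fin 7)) ∈ GdLrels by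
      simp [GdLrels])
    simpa only [map_mul, map_inv, hof] using this
  have g3 : L₂⁻¹ * C₃ * L₂ * ((C₂ * C₃) * C₄ * (C₂ * C₃)⁻¹)⁻¹ = 1 := by
    have := key _ (show ((FreeGroup.of 5)⁻¹ * FreeGroup.of 2 * FreeGroup.of 5 *
      ((FreeGroup.of 1 * FreeGroup.of 2) * FreeGroup.of 3 *
       (FreeGroup.of 1 * FreeGroup.of 2)⁻¹)⁻¹ : FreeGroup (Fin 7)) ∈ GdLrels by
      simp [GdLrels])
    simpa only [map_mul, map_inv, hof] using this
  have g4 : L₂⁻¹ * C₄ * L₂ * C₂⁻¹ = 1 := by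
    have := key _ (show ((FreeGroup.of 5)⁻¹ * FreeGroup.of 3 * FreeGroup.of 5 *
      (FreeGroup.of 1)⁻¹ : FreeGroup (Fin 7)) ∈ GdLrels by simp [GdLrels])
    simpa only [map_mul, map_inv, hof] using this
  have g5 : L₁⁻¹ * C₁ * L₁ * ((C₁ * C₂) * C₃ * (C₁ * C₂)⁻¹)⁻¹ = 1 := by
    have := key _ (show ((FreeGroup.of 4)⁻¹ * FreeGroup.of 0 * FreeGroup.of 4 *
      ((FreeGroup.of 0 * FreeGroup.of 1) * FreeGroup.of 2 *
       (FreeGroup.of 0 * FreeGroup.of 1)⁻¹)⁻¹ : FreeGroup (Fin 7)) ∈ GdLrels by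
      simp [GdLrels])
    simpa only [map_mul, map_inv, hof] using this
  have g6 : L₁⁻¹ * C₂ * L₁ * ((C₁ * C₂) * C₁ * (C₁ * C₂)⁻¹)⁻¹ = 1 := by
    have := key _ (show ((FreeGroup.of 4)⁻¹ * FreeGroup.of 1 * FreeGroup.of 4 *
      ((FreeGroup.of 0 * FreeGroup.of 1) * FreeGroup.of 0 *
       (FreeGroup.of 0 * FreeGroup.of 1)⁻¹)⁻¹ : FreeGroup (Fin 7)) ∈ GdLrels by
      simp [GdLrels])
    simpa only [map_mul, map_inv, hof] using this
  have g7 : L₁⁻¹ * C₃ * L₁ * (C₁ * C₂ * C₁⁻¹)⁻¹ = 1 := by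
    have := key _ (show ((FreeGroup.of 4)⁻¹ * FreeGroup.of 2 * FreeGroup.of 4 *
      (FreeGroup.of 0 * FreeGroup.of 1 * (FreeGroup.of 0)⁻¹)⁻¹ : FreeGroup (Fin 7)) ∈ GdLrels by
      simp [GdLrels])
    simpa only [map_mul, map_inv, hof] using this
  have g8 : L₁ * C₄ * L₁⁻¹ * C₄⁻¹ = 1 := by
    have := key _ (show (FreeGroup.of 4 * FreeGroup.of 3 * (FreeGroup.of 4)⁻¹ *
      (FreeGroup.of 3)⁻¹ : FreeGroup (Fin 7)) ∈ GdLrels by simp [GdLrels])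
    simpa only [map_mul, map_inv, hof] using this
  have g9 : C₁ * C₂ * C₃ * C₄ * L₁ * L₂ * Li = 1 := by
    have := key _ (show (FreeGroup.of 0 * FreeGroup.of 1 * FreeGroup.of 2 * FreeGroup.of 3 *
      FreeGroup.of 4 * FreeGroup.of 5 * FreeGroup.of 6 : FreeGroup (Fin 7)) ∈ GdLrels by
      simp [GdLrels])
    simpa only [map_mul, map_inv, hof] using this
  -- turn relators into equations
  have e1 : L₂ * C₁ * L₂⁻¹ = C₁ := mul_inv_eq_one.mp g1
  have e2 : L₂⁻¹ * C₂ * L₂ = (C₂ * C₃ * C₄) * C₃ * (C₂ * C₃ * C₄)⁻¹ := mul_inv_eq_one.mp g2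
  have e3 : L₂⁻¹ * C₃ * L₂ = (C₂ * C₃) * C₄ * (C₂ * C₃)⁻¹ := mul_inv_eq_one.mp g3
  have e4 : L₂⁻¹ * C₄ * L₂ = C₂ := mul_inv_eq_one.mp g4
  have e5 : L₁⁻¹ * C₁ * L₁ = (C₁ * C₂) * C₃ * (C₁ * C₂)⁻¹ := mul_inv_eq_one.mp g5
  have e6 : L₁⁻¹ * C₂ * L₁ = (C₁ * C₂) * C₁ * (C₁ * C₂)⁻¹ := mul_inv_eq_one.mp g6
  have e7 : L₁⁻¹ * C₃ * L₁ = C₁ * C₂ * C₁⁻¹ := mul_inv_eq_one.mp g7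
  have e8 : L₁ * C₄ * L₁⁻¹ = C₄ := mul_inv_eq_one.mp g8
  have e8' : L₁⁻¹ * C₄ * L₁ = C₄ := by
    conv_lhs => rw [mul_assoc, ← e8]
    group
  have e1' : L₂⁻¹ * C₁ * L₂ = C₁ := by
    conv_lhs => rw [mul_assoc, ← e1]
    group
  -- c commutes with L₁ and L₂
  have hA : L₁⁻¹ * (C₁ * C₂ * C₃ * C₄) * L₁ = C₁ * C₂ * C₃ * C₄ := by
    have expand : L₁⁻¹ * (C₁ * C₂ * C₃ * C₄) * L₁ =
        (L₁⁻¹ * C₁ * L₁) * (L₁⁻¹ * C₂ * L₁) * (L₁⁻¹ * C₃ * L₁) * (L₁⁻¹ * C₄ * L₁) := by group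
    rw [expand, e5, e6, e7, e8']
    group
  have hB : L₂⁻¹ * (C₁ * C₂ * C₃ * C₄) * L₂ = C₁ * C₂ * C₃ * C₄ := by
    have expand : L₂⁻¹ * (C₁ * C₂ * C₃ * C₄) * L₂ =
        (L₂⁻¹ * C₁ * L₂) * (L₂⁻¹ * C₂ * L₂) * (L₂⁻¹ * C₃ * L₂) * (L₂⁻¹ * C₄ * L₂) := by group
    rw [expand, e1', e2, e3, e4]
    group
  have comm1 : Commute c L₁ := by
    show (C₁ * C₂ * C₃ * C₄) * L₁ = L₁ * (C₁ * C₂ * C₃ * C₄)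
    conv_rhs => rw [← hA]
    group
  have comm2 : Commute c L₂ := by
    show (C₁ * C₂ * C₃ * C₄) * L₂ = L₂ * (C₁ * C₂ * C₃ * C₄)
    conv_rhs => rw [← hB]
    group
  have hli : Li = (c * L₁ * L₂)⁻¹ := by
    have h : ((C₁ * C₂ * C₃ * C₄) * L₁ * L₂) * Li = 1 := g9
    exact ((mul_eq_one_iff_inv_eq.mp h).symm)
  have commLi : Commute c Li := by
    rw [hli]
    exact (((Commute.refl c).mul_right comm1).mul_right comm2).inv_right
  have hprod : L₁ * L₂ * Li = c⁻¹ := by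
    rw [hli]; group
  refine ⟨comm1, comm2, hli, commLi, hprod, ?_, ?_, ?_⟩
  · rw [hprod]; exact comm1.inv_left
  · rw [hprod]; exact comm2.inv_left
  · rw [hprod]; exact commLi.inv_left
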